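/- For every integer k ≥ 1, the path graph P_{2^{k−1}} has tree-depth k, and for every vertex v of P_{2^{k−1}} there exists a k-ranking in which v is the unique vertex with label 1. -/

import Mathlib

/-- A `k`-ranking of a simple graph `G`: a labeling of the vertices with values from
`{1, …, k}` such that every path joining two distinct vertices with the same label
contains a vertex with a strictly higher label. -/
def IsRanking {V : Type*} (G : SimpleGraph V) (k : ℕ) (f : V → ℕ) : Prop :=
  (∀ v, 1 ≤ f v ∧ f v ≤ k) ∧
  ∀ ⦃u v : V⦄ (p : G.Walk u v), p.IsPath → u ≠ v → f u = f v →
    ∃ w ∈ p.support, f u < f w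

/-- The tree-depth of `G`: the least `k` such that `G` admits a `k`-ranking. -/
noncomputable def treedepth {V : Type*} (G : SimpleGraph V) : ℕ :=
  sInf {k | ∃ f, IsRanking G k f}

open SimpleGraph

/-! ### 2-adic valuation helpers -/

private def v2 (x : ℕ) : ℕ := padicValNat 2 x

private lemma v2_dvd (x : ℕ) : 2 ^ v2 x ∣ x := pow_padicValNat_dvd

private lemma v2_ge {x t : ℕ} (hx : x ≠ 0) (h : 2 ^ t ∣ x) : t ≤ v2 x :=
  (padicValNat_dvd_iff_le hx).mp h

private lemma v2_lt {x K : ℕ} (hx : x ≠ 0) (h : x < 2 ^ K) : v2 x < K := by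
  have h1 : 2 ^ v2 x ≤ x := Nat.le_of_dvd (Nat.pos_of_ne_zero hx) (v2_dvd x)
  have h2 : 2 ^ v2 x < 2 ^ K := lt_of_le_of_lt h1 h
  exact (Nat.pow_lt_pow_iff_right (by norm_num)).mp h2

private lemma not_dvd_succ_v2 {x : ℕ} (hx : x ≠ 0) : ¬ 2 ^ (v2 x + 1) ∣ x := by
  intro h
  have := v2_ge hx h
  omega

private lemma ruler_mid {a b : ℕ} (ha : a ≠ 0) (hab : a < b) (hv : v2 a = v2 b) :
    ∃ c, a < c ∧ c < b ∧ v2 a < v2 c := by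
  obtain ⟨t, htA, htB⟩ : ∃ t, v2 a = t ∧ v2 b = t := ⟨v2 a, rfl, hv.symm⟩
  have hb : b ≠ 0 := by omega
  obtain ⟨x, hx⟩ : 2 ^ t ∣ a := htA ▸ v2_dvd a
  obtain ⟨y, hy⟩ : 2 ^ t ∣ b := htB ▸ v2_dvd b
  have h2t : 0 < 2 ^ t := Nat.pow_pos (by norm_num)
  have hxodd : ¬ 2 ∣ x := by
    rintro ⟨x', hx'⟩
    have hd : 2 ^ (t + 1) ∣ a := ⟨x', by rw [hx, hx', pow_succ]; ring⟩
    have := v2_ge ha hd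
    omega
  have hyodd : ¬ 2 ∣ y := by
    rintro ⟨y', hy'⟩
    have hd : 2 ^ (t + 1) ∣ b := ⟨y', by rw [hy, hy', pow_succ]; ring⟩
    have := v2_ge hb hd
    omega
  have hxy : x < y := by
    by_contra hc
    push_neg at hc
    have : b ≤ a := by rw [hx, hy]; exact Nat.mul_le_mul_left _ hc
    omega
  have hx1 : 2 ∣ x + 1 := by omega
  have hx1y : x + 1 < y := by
    rcases Nat.lt_or_ge (x + 1) y with h | h
    · exact h
    · have : x + 1 = y := by omega
      exact absurd (this ▸ hx1) hyodd
  refine ⟨2 ^ t * (x + 1), ?_, ?_, ?_⟩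
  · rw [hx]; exact (Nat.mul_lt_mul_left h2t).mpr (by omega)
  · rw [hy]; exact (Nat.mul_lt_mul_left h2t).mpr hx1y
  · have hc0 : 2 ^ t * (x + 1) ≠ 0 := by positivity
    obtain ⟨x', hx'⟩ := hx1
    have hd : 2 ^ (t + 1) ∣ 2 ^ t * (x + 1) := ⟨x', by rw [hx', pow_succ]; ring⟩
    have := v2_ge hc0 hd
    omega

/-! ### Rankings on intervals of naturals -/

/-- `f` is a good `k`-labeling of `{0, …, n-1}` with a unique `1` at `p`. -/
private def Okf (n k p : ℕ) (f : ℕ → ℕ) : Prop :=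
  (∀ i < n, 1 ≤ f i ∧ f i ≤ k) ∧ f p = 1 ∧ (∀ i < n, f i = 1 → i = p) ∧
  ∀ a b, a < b → b < n → f a = f b → ∃ w, a < w ∧ w < b ∧ f a < f w

private lemma okf_mono {n k k' p : ℕ} {f : ℕ → ℕ} (h : Okf n k p f) (hk : k ≤ k') :
    Okf n k' p f := by
  obtain ⟨h1, h2, h3, h4⟩ := h
  exact ⟨fun i hi => ⟨(h1 i hi).1, le_trans (h1 i hi).2 hk⟩, h2, h3, h4⟩

private lemma okf_reflect {n k p : ℕ} {f : ℕ → ℕ} (hp : p < n) (h : Okf n k p f) :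
    Okf n k (n - 1 - p) (fun i => f (n - 1 - i)) := by
  obtain ⟨h1, h2, h3, h4⟩ := h
  refine ⟨fun i hi => h1 _ (by omega), ?_, fun i hi hfi => ?_, fun a b hab hbn hfab => ?_⟩
  · show f (n - 1 - (n - 1 - p)) = 1
    have : n - 1 - (n - 1 - p) = p := by omega
    rw [this, h2]
  · have := h3 _ (by omega) hfi
    omega
  · have hfab' : f (n - 1 - a) = f (n - 1 - b) := hfab
    obtain ⟨w, hw1, hw2, hw3⟩ := h4 (n - 1 - b) (n - 1 - a) (by omega) (by omega) hfab'.symm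
    refine ⟨n - 1 - w, by omega, by omega, ?_⟩
    show f (n - 1 - a) < f (n - 1 - (n - 1 - w))
    have hwn : n - 1 - (n - 1 - w) = w := by omega
    rw [hwn, hfab']
    exact hw3

private lemma okf_core {K n p : ℕ} (h1 : 2 ^ K < n) (h2 : n ≤ 2 ^ (K + 1)) (hp : p < 2 ^ K)
    (g : ℕ → ℕ) (hg : Okf (2 ^ K) (K + 1) p g) :
    Okf n (K + 2) p
      (fun i => if i < 2 ^ K then g i else if i = 2 ^ K then K + 2 else v2 (i - 2 ^ K) + 2) := by
  obtain ⟨g1, g2, g3, g4⟩ := hg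
  have hpow : 2 ^ (K + 1) = 2 ^ K + 2 ^ K := by rw [pow_succ]; omega
  have hval : ∀ i, 2 ^ K < i → i < n → v2 (i - 2 ^ K) + 2 ≤ K + 1 := by
    intro i hi hin
    have hne : i - 2 ^ K ≠ 0 := by omega
    have hlt : i - 2 ^ K < 2 ^ K := by omega
    have := v2_lt hne hlt
    omega
  refine ⟨fun i hi => ?_, ?_, fun i hi hfi => ?_, fun a b hab hbn hfab => ?_⟩
  · by_cases hiK : i < 2 ^ K
    · simp only [hiK, if_pos]
      have := g1 i hiK
      omega
    · by_cases hieq : i = 2 ^ K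
      · simp [hiK, hieq]
      · simp only [hiK, if_neg, hieq, if_false]
        have := hval i (by omega) hi
        omega
  · simp only [hp, if_pos]
    exact g2
  · by_cases hiK : i < 2 ^ K
    · simp only [hiK, if_pos] at hfi
      exact g3 i hiK hfi
    · by_cases hieq : i = 2 ^ K
      · simp [hiK, hieq] at hfi
      · simp only [hiK, if_neg, hieq, if_false] at hfi
        omega
  · -- interval property
    by_cases hbK : b < 2 ^ K
    · have haK : a < 2 ^ K := by omega
      simp only [haK, hbK, if_pos] at hfab ⊢
      obtain ⟨w, hw1, hw2, hw3⟩ := g4 a b hab hbK hfab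
      have hwK : w < 2 ^ K := by omega
      exact ⟨w, hw1, hw2, by simp only [hwK, if_pos]; exact hw3⟩
    · by_cases hbeq : b = 2 ^ K
      · -- b is the separator: impossible since f a ≤ K+1 < K+2 = f b
        exfalso
        have haK : a < 2 ^ K := by omega
        have := g1 a haK
        simp only [haK, if_pos, hbeq] at hfab
        simp only [lt_irrefl, if_neg, if_pos] at hfab
        simp at hfab
        omega
      · have hbgt : 2 ^ K < b := by omega
        by_cases haK : a < 2 ^ K
        · -- witness is the separator
          refine ⟨2 ^ K, haK, hbgt, ?_⟩
          have := g1 a haK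
          simp only [haK, if_pos, lt_irrefl, if_neg]
          simp
          omega
        · by_cases haeq : a = 2 ^ K
          · exfalso
            have := hval b hbgt hbn
            simp only [haeq, lt_irrefl] at hfab
            simp at hfab
            have hbK' : ¬ b < 2 ^ K := by omega
            rw [if_neg hbK', if_neg hbeq] at hfab
            omega
          · have hagt : 2 ^ K < a := by omega
            have haK' : ¬ a < 2 ^ K := by omega
            have hbK' : ¬ b < 2 ^ K := by omega
            have haeq' : a ≠ 2 ^ K := haeq
            simp only [haK', if_neg, haeq', if_false, hbK', hbeq] at hfab ⊢
            have hane : a - 2 ^ K ≠ 0 := by omega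
            have hvv : v2 (a - 2 ^ K) = v2 (b - 2 ^ K) := by omega
            obtain ⟨c, hc1, hc2, hc3⟩ := ruler_mid hane (by omega) hvv
            refine ⟨2 ^ K + c, by omega, by omega, ?_⟩
            have hwK : ¬ 2 ^ K + c < 2 ^ K := by omega
            have hwne : 2 ^ K + c ≠ 2 ^ K := by omega
            rw [if_neg hwK, if_neg hwne]
            have : 2 ^ K + c - 2 ^ K = c := by omega
            rw [this]
            omega

private lemma okf_exists : ∀ K n p : ℕ, 0 < n → n ≤ 2 ^ K → p < n → ∃ f, Okf n (K + 1) p f := by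
  intro K
  induction K with
  | zero =>
    intro n p hn h2 hp
    have hn1 : n = 1 := by
      have : (2:ℕ) ^ 0 = 1 := pow_zero 2
      omega
    refine ⟨fun _ => 1, fun i hi => ⟨le_rfl, le_rfl⟩, rfl, fun i hi hfi => by omega,
      fun a b hab hbn _ => by omega⟩
  | succ K ih =>
    intro n p hn h2 hp
    by_cases hsmall : n ≤ 2 ^ K
    · obtain ⟨f, hf⟩ := ih n p hn hsmall hp
      exact ⟨f, okf_mono hf (by omega)⟩
    · push_neg at hsmall
      by_cases hpK : p < 2 ^ K
      · obtain ⟨g, hg⟩ := ih (2 ^ K) p (by positivity) le_rfl hpK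
        exact ⟨_, okf_core hsmall h2 hpK g hg⟩
      · -- reflect
        have hpow : 2 ^ (K + 1) = 2 ^ K + 2 ^ K := by rw [pow_succ]; omega
        set p' := n - 1 - p with hp'
        have hp'K : p' < 2 ^ K := by omega
        obtain ⟨g, hg⟩ := ih (2 ^ K) p' (by positivity) le_rfl hp'K
        have hcore := okf_core hsmall h2 hp'K g hg
        have hrefl := okf_reflect (by omega : p' < n) hcore
        have : n - 1 - p' = p := by omega
        rw [this] at hrefl
        exact ⟨_, hrefl⟩

/-! ### Path graph walk lemmas -/

private lemma mem_support_of_between {n : ℕ} {u v : Fin n} (p : (pathGraph n).Walk u v)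
    (m : Fin n) (h1 : u.val ≤ m.val) (h2 : m.val ≤ v.val) : m ∈ p.support := by
  induction p with
  | nil =>
    simp only [Walk.support_nil, List.mem_singleton]
    exact Fin.ext (le_antisymm h2 h1)
  | @cons x y z h q ih =>
    by_cases hm : m = x
    · simp [hm]
    · have hxm : x.val < m.val := by
        rcases Nat.lt_or_ge x.val m.val with h' | h'
        · exact h'
        · exact absurd (Fin.ext (by omega) : m = x) hm
      have hy : y.val ≤ m.val := by
        rcases (pathGraph_adj.mp h) with h' | h' <;> omega
      simp only [Walk.support_cons, List.mem_cons]
      exact Or.inr (ih hy h2)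

private lemma mem_support_of_between' {n : ℕ} {u v : Fin n} (p : (pathGraph n).Walk u v)
    (m : Fin n) (h1 : v.val ≤ m.val) (h2 : m.val ≤ u.val) : m ∈ p.support := by
  have := mem_support_of_between p.reverse m h1 h2
  rw [Walk.support_reverse, List.mem_reverse] at this
  exact this

/-- The shift homomorphism between path graphs. -/
private def shiftHom (m n a : ℕ) (h : a + m ≤ n) : pathGraph m →g pathGraph n where
  toFun i := ⟨a + i.val, by omega⟩
  map_rel' := by
    intro i j hij
    rw [pathGraph_adj] at hij ⊢
    simp only []
    omega

/-! ### Lower bound -/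

private lemma no_small_ranking : ∀ K : ℕ, ¬ ∃ f, IsRanking (pathGraph (2 ^ K)) K f := by
  intro K
  induction K with
  | zero =>
    rintro ⟨f, hb, -⟩
    have := hb ⟨0, by norm_num⟩
    omega
  | succ K ih =>
    rintro ⟨f, hb, hpath⟩
    have hpos : 0 < 2 ^ (K + 1) := by positivity
    have hpow : 2 ^ (K + 1) = 2 ^ K + 2 ^ K := by rw [pow_succ]; omega
    obtain ⟨u, -, hu⟩ := Finset.exists_max_image Finset.univ f ⟨⟨0, hpos⟩, Finset.mem_univ _⟩
    have hu' : ∀ w, f w ≤ f u := fun w => hu w (Finset.mem_univ _)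
    have hmax : ∀ w : Fin (2 ^ (K + 1)), w ≠ u → f w < f u := by
      intro w hw
      rcases lt_or_eq_of_le (hu' w) with h | h
      · exact h
      · exfalso
        obtain ⟨q⟩ := pathGraph_preconnected (2 ^ (K + 1)) w u
        obtain ⟨x, -, hfx⟩ := hpath q.toPath.1 q.toPath.2 hw h
        have := hu' x
        omega
    set a : ℕ := if u.val < 2 ^ K then 2 ^ K else 0 with ha
    have haK : a + 2 ^ K ≤ 2 ^ (K + 1) := by
      rw [ha]; split_ifs <;> omega
    set h := shiftHom (2 ^ K) (2 ^ (K + 1)) a haK with hh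
    have hinj : Function.Injective h := by
      intro i j hij
      have : a + i.val = a + j.val := congrArg Fin.val hij
      exact Fin.ext (by omega)
    have hne : ∀ i : Fin (2 ^ K), h i ≠ u := by
      intro i hiu
      have hval : (h i).val = a + i.val := rfl
      have hiK := i.isLt
      rw [ha] at hval
      by_cases hc : u.val < 2 ^ K
      · rw [if_pos hc] at hval
        have := congrArg Fin.val hiu
        omega
      · rw [if_neg hc] at hval
        have := congrArg Fin.val hiu
        omega
    apply ih
    refine ⟨fun i => f (h i), fun i => ?_, fun x y q hq hxy heq => ?_⟩
    · obtain ⟨hb1, hb2⟩ := hb (h i)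
      have h2 := hmax (h i) (hne i)
      obtain ⟨hbu1, hbu2⟩ := hb u
      refine ⟨hb1, ?_⟩
      show f (h i) ≤ K
      omega
    · obtain ⟨w, hw, hfw⟩ := hpath (q.map h) (q.map_isPath_of_injective hinj hq)
        (fun hc => hxy (hinj hc)) heq
      rw [Walk.support_map] at hw
      obtain ⟨z, hz, hzw⟩ := List.mem_map.mp hw
      refine ⟨z, hz, ?_⟩
      show f (h x) < f (h z)
      rw [hzw]
      exact hfw

private lemma isRanking_mono {V : Type*} {G : SimpleGraph V} {k k' : ℕ} {f : V → ℕ}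
    (h : IsRanking G k f) (hk : k ≤ k') : IsRanking G k' f :=
  ⟨fun v => ⟨(h.1 v).1, le_trans (h.1 v).2 hk⟩, h.2⟩

/-! ### Okf to ranking -/

private lemma okf_isRanking {n k p : ℕ} {F : ℕ → ℕ} (h : Okf n k p F) :
    IsRanking (pathGraph n) k (fun i : Fin n => F i.val) := by
  obtain ⟨h1, -, -, h4⟩ := h
  refine ⟨fun v => h1 v.val v.isLt, fun u v q hq huv heq => ?_⟩
  have hne : u.val ≠ v.val := fun hc => huv (Fin.ext hc)
  rcases Nat.lt_or_ge u.val v.val with hlt | hge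
  · have heq' : F u.val = F v.val := heq
    obtain ⟨w, hw1, hw2, hw3⟩ := h4 u.val v.val hlt v.isLt heq'
    have hwn : w < n := lt_trans hw2 v.isLt
    exact ⟨⟨w, hwn⟩, mem_support_of_between q ⟨w, hwn⟩ (le_of_lt hw1) (le_of_lt hw2), hw3⟩
  · have hlt : v.val < u.val := by omega
    have heq' : F u.val = F v.val := heq
    obtain ⟨w, hw1, hw2, hw3⟩ := h4 v.val u.val hlt u.isLt heq'.symm
    have hwn : w < n := lt_trans hw2 u.isLt
    refine ⟨⟨w, hwn⟩, mem_support_of_between' q ⟨w, hwn⟩ (le_of_lt hw1) (le_of_lt hw2), ?_⟩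
    show F u.val < F w
    rw [heq']
    exact hw3

/-- For every `k ≥ 1`, the path `P_{2^{k-1}}` has tree-depth `k`, and every vertex is
the unique vertex with label 1 in some `k`-ranking. -/
theorem pathGraph_treedepth_and_oneUnique (k : ℕ) (hk : 1 ≤ k) :
    treedepth (SimpleGraph.pathGraph (2 ^ (k - 1))) = k ∧
    ∀ v : Fin (2 ^ (k - 1)), ∃ f : Fin (2 ^ (k - 1)) → ℕ,
      IsRanking (SimpleGraph.pathGraph (2 ^ (k - 1))) k f ∧
      f v = 1 ∧ ∀ w, f w = 1 → w = v := by
  have hpos : (0 : ℕ) < 2 ^ (k - 1) := by positivity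
  have hkk : k - 1 + 1 = k := by omega
  have hsecond : ∀ v : Fin (2 ^ (k - 1)), ∃ f : Fin (2 ^ (k - 1)) → ℕ,
      IsRanking (SimpleGraph.pathGraph (2 ^ (k - 1))) k f ∧
      f v = 1 ∧ ∀ w, f w = 1 → w = v := by
    intro v
    obtain ⟨F, hF⟩ := okf_exists (k - 1) (2 ^ (k - 1)) v.val hpos le_rfl v.isLt
    refine ⟨fun i => F i.val, ?_, ?_, ?_⟩
    · have := okf_isRanking hF
      rwa [hkk] at this
    · exact hF.2.1
    · intro w hw
      exact Fin.ext (hF.2.2.1 w.val w.isLt hw)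
  refine ⟨?_, hsecond⟩
  obtain ⟨f0, hf0, -, -⟩ := hsecond ⟨0, hpos⟩
  have hkS : k ∈ {m | ∃ f, IsRanking (SimpleGraph.pathGraph (2 ^ (k - 1))) m f} := ⟨f0, hf0⟩
  have hlow : ∀ m ∈ {m | ∃ f, IsRanking (SimpleGraph.pathGraph (2 ^ (k - 1))) m f}, k ≤ m := by
    rintro m ⟨f, hf⟩
    by_contra hc
    push_neg at hc
    have hm : m ≤ k - 1 := by omega
    exact no_small_ranking (k - 1) ⟨f, isRanking_mono hf hm⟩
  exact le_antisymm (Nat.sInf_le hkS) (le_csInf ⟨k, hkS⟩ hlow)
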